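/- Suppose (i) for every request i ∈ {1,…,M}, the online choice has no larger exponential incremental cost than the offline choice: Σ_{r ∈ R} (α^{z_r(i−1) + w_i(r)} − α^{z_r(i−1)}) ≤ Σ_{r ∈ R} (α^{z_r(i−1) + w^o_i(r)} − α^{z_r(i−1)}); and (ii) the offline solution's final loads satisfy z^o_r(M) ≤ 1 for all r ∈ R. Then the online loads satisfy z_r(M) ≤ log_α( γ·|R| / (γ−1) ) for every r ∈ R. (This is the abstract normalized form of Proposition 3: if there exists an offline mapping with maximum weighted cost at most Ĵ, then the online algorithm's maximum load on every node and link never exceeds β·Ĵ with β = log_α(γ(NK+L)/(γ−1)).) -/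

import Mathlib

open scoped BigOperators

lemma rpow_le_one_add_mul {α x : ℝ} (hα : 1 < α) (hx0 : 0 ≤ x) (hx1 : x ≤ 1) :
    α ^ x ≤ 1 + x * (α - 1) := by
  have hα0 : (0:ℝ) < α := lt_trans one_pos hα
  have h := convexOn_exp.2 (Set.mem_univ (0:ℝ)) (Set.mem_univ (Real.log α))
    (by linarith : (0:ℝ) ≤ 1 - x) hx0 (by ring)
  simp only [smul_eq_mul, mul_zero, zero_add, Real.exp_zero, Real.exp_log hα0] at h
  rw [Real.rpow_def_of_pos hα0]
  calc Real.exp (Real.log α * x) = Real.exp (x * Real.log α) := by ring_nf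
    _ ≤ (1 - x) * 1 + x * α := h
    _ = 1 + x * (α - 1) := by ring

/-- abstract normalized form of Proposition 3: let `γ > 1`, `α = 1 + 1/γ`,
`R` a nonempty finite set of elements, and `M` requests with nonnegative online increments
`w i` and offline increments `wo i` (requests indexed by `i ∈ {0,…,M−1}`), cumulative loads
`z i r = Σ_{j<i} w j r` and `zo i r = Σ_{j<i} wo j r`.  If (i) for every request the online
choice has no larger exponential incremental cost than the offline choice, and (ii) the
offline final loads satisfy `zo M r ≤ 1` for all `r`, then the online loads satisfy
`z M r ≤ log_α(γ·|R|/(γ−1))` for every `r`. -/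
theorem online_load_bound {R : Type*} [Fintype R] [Nonempty R]
    (γ α : ℝ) (hγ : 1 < γ) (hα : α = 1 + 1/γ)
    (M : ℕ) (w wo : ℕ → R → ℝ)
    (hw : ∀ i r, 0 ≤ w i r) (hwo : ∀ i r, 0 ≤ wo i r)
    (z zo : ℕ → R → ℝ)
    (hz : ∀ i r, z i r = ∑ j ∈ Finset.range i, w j r)
    (hzo : ∀ i r, zo i r = ∑ j ∈ Finset.range i, wo j r)
    (hstep : ∀ i < M,
      ∑ r : R, (α ^ (z i r + w i r) - α ^ (z i r)) ≤
        ∑ r : R, (α ^ (z i r + wo i r) - α ^ (z i r)))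
    (hoff : ∀ r, zo M r ≤ 1) :
    ∀ r, z M r ≤ Real.logb α (γ * (Fintype.card R) / (γ - 1)) := by
  have hγ0 : (0:ℝ) < γ := lt_trans one_pos hγ
  have hγinv : (0:ℝ) < 1/γ := by positivity
  have hα1 : 1 < α := by rw [hα]; linarith
  have hα0 : (0:ℝ) < α := lt_trans one_pos hα1
  have hγα : γ * (α - 1) = 1 := by rw [hα]; field_simp; ring
  have hzo0 : ∀ i r, 0 ≤ zo i r := fun i r => by
    rw [hzo]; exact Finset.sum_nonneg fun j _ => hwo j r
  have hzsucc : ∀ i r, z (i+1) r = z i r + w i r := fun i r => by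
    rw [hz, hz, Finset.sum_range_succ]
  have hzosucc : ∀ i r, zo (i+1) r = zo i r + wo i r := fun i r => by
    rw [hzo, hzo, Finset.sum_range_succ]
  have hzoM : ∀ i, i ≤ M → ∀ r, zo i r ≤ zo M r := fun i hi r => by
    rw [hzo, hzo]
    exact Finset.sum_le_sum_of_subset_of_nonneg
      (Finset.range_subset_range.mpr hi) (fun j _ _ => hwo j r)
  have hwo1 : ∀ i, i < M → ∀ r, wo i r ≤ 1 := fun i hi r => by
    refine le_trans ?_ (hoff r)
    rw [hzo]
    exact Finset.single_le_sum (fun j _ => hwo j r) (Finset.mem_range.mpr hi)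
  set Φ : ℕ → ℝ := fun i => ∑ r : R, α ^ (z i r) * (γ - zo i r) with hΦ
  have key : ∀ i, i < M → Φ (i+1) ≤ Φ i := by
    intro i hi
    have expand : Φ (i+1) = Φ i
        + (∑ r : R, (α ^ (z i r + w i r) - α ^ (z i r)) * (γ - zo (i+1) r))
        - ∑ r : R, α ^ (z i r) * wo i r := by
      rw [hΦ]
      rw [← Finset.sum_add_distrib, ← Finset.sum_sub_distrib]
      refine Finset.sum_congr rfl fun r _ => ?_
      rw [hzsucc, hzosucc]
      ring
    have hA : (∑ r : R, (α ^ (z i r + w i r) - α ^ (z i r)) * (γ - zo (i+1) r))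
        ≤ γ * ∑ r : R, (α ^ (z i r + w i r) - α ^ (z i r)) := by
      rw [Finset.mul_sum]
      refine Finset.sum_le_sum fun r _ => ?_
      have hpos : 0 ≤ α ^ (z i r + w i r) - α ^ (z i r) := by
        have := Real.rpow_le_rpow_of_exponent_le hα1.le
          (by linarith [hw i r] : z i r ≤ z i r + w i r)
        linarith
      have : γ - zo (i+1) r ≤ γ := by linarith [hzo0 (i+1) r]
      nlinarith
    have hB : γ * (∑ r : R, (α ^ (z i r + wo i r) - α ^ (z i r)))
        ≤ ∑ r : R, α ^ (z i r) * wo i r := by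
      rw [Finset.mul_sum]
      refine Finset.sum_le_sum fun r _ => ?_
      have hzr : 0 < α ^ (z i r) := Real.rpow_pos_of_pos hα0 _
      have hsplit : α ^ (z i r + wo i r) = α ^ (z i r) * α ^ (wo i r) :=
        Real.rpow_add hα0 _ _
      have hcv : α ^ (wo i r) ≤ 1 + wo i r * (α - 1) :=
        rpow_le_one_add_mul hα1 (hwo i r) (hwo1 i hi r)
      rw [hsplit]
      have hmul := mul_le_mul_of_nonneg_left hcv hγ0.le
      have h2 : γ * (wo i r * (α - 1)) = wo i r := by
        rw [show γ * (wo i r * (α - 1)) = wo i r * (γ * (α - 1)) by ring, hγα, mul_one]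
      have h1 : γ * (α ^ wo i r - 1) ≤ wo i r := by linarith
      have h3 := mul_le_mul_of_nonneg_left h1 hzr.le
      linarith [h3]
    have hS := hstep i hi
    have := mul_le_mul_of_nonneg_left hS hγ0.le
    linarith
  have mono : ∀ i, i ≤ M → Φ i ≤ Φ 0 := by
    intro i hi
    induction i with
    | zero => exact le_rfl
    | succ n ih =>
      exact le_trans (key n (lt_of_lt_of_le (Nat.lt_succ_self n) hi))
        (ih (le_trans (Nat.le_succ n) hi))
  have hΦ0 : Φ 0 = γ * (Fintype.card R) := by
    rw [hΦ]
    have : ∀ r : R, α ^ (z 0 r) * (γ - zo 0 r) = γ := by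
      intro r
      have h1 : z 0 r = 0 := by rw [hz]; simp
      have h2 : zo 0 r = 0 := by rw [hzo]; simp
      rw [h1, h2, Real.rpow_zero]; ring
    simp only [this, Finset.sum_const, Finset.card_univ, nsmul_eq_mul]
    ring
  intro r
  have hfin : (γ - 1) * α ^ (z M r) ≤ γ * (Fintype.card R) := by
    have hsingle : α ^ (z M r) * (γ - zo M r) ≤ Φ M := by
      rw [hΦ]
      refine Finset.single_le_sum (f := fun r' => α ^ (z M r') * (γ - zo M r'))
        (fun r' _ => ?_) (Finset.mem_univ r)
      exact mul_nonneg (Real.rpow_pos_of_pos hα0 _).le (by linarith [hoff r'])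
    have hzr : 0 < α ^ (z M r) := Real.rpow_pos_of_pos hα0 _
    have : (γ - 1) * α ^ (z M r) ≤ α ^ (z M r) * (γ - zo M r) := by
      nlinarith [hoff r]
    linarith [mono M le_rfl, hΦ0.ge, hΦ0.le]
  have hcard : (0:ℝ) < (Fintype.card R : ℝ) := by
    exact_mod_cast Fintype.card_pos
  have hle : α ^ (z M r) ≤ γ * (Fintype.card R) / (γ - 1) := by
    rw [le_div_iff₀ (by linarith : (0:ℝ) < γ - 1)]
    linarith [hfin]
  calc z M r = Real.logb α (α ^ (z M r)) :=
        (Real.logb_rpow hα0 (ne_of_gt hα1)).symm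
    _ ≤ Real.logb α (γ * (Fintype.card R) / (γ - 1)) :=
        Real.logb_le_logb_of_le hα1 (Real.rpow_pos_of_pos hα0 _) hle
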